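/- Let X be a real random variable with finite expectation whose cumulative distribution function F is continuous. Then the mapping s ↦ Δ_s(X) is nonincreasing on (−1,∞) (taking values in [0,∞]), Δ_s(X) → 0 as s → ∞, and Δ_s(X) → E[X] − ess inf X as s → −1+, where the limit equals +∞ when X is not essentially bounded below. -/

import Mathlib

open MeasureTheory Set Filter
open scoped ENNReal

noncomputable def tgAux (u s : ℝ) : ℝ :=
  if s = 0 then -(u * Real.log u) else (1/s) * (u * (1 - u ^ s))

lemma hhAux_anti (t : ℝ) :
    Antitone (fun s : ℝ => if s = 0 then -t else (1 - Real.exp (s * t)) / s) := by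
  have hcvx : ConvexOn ℝ univ fun s : ℝ => Real.exp (s * t) := by
    have h := convexOn_exp.comp_affineMap ((LinearMap.toSpanSingleton ℝ ℝ t).toAffineMap)
    simpa [Function.comp_def, LinearMap.toSpanSingleton, smul_eq_mul] using h
  have key : ∀ a b : ℝ, a ≤ b → a ≠ 0 → b ≠ 0 →
      (1 - Real.exp (b * t)) / b ≤ (1 - Real.exp (a * t)) / a := by
    intro a b hab ha hb
    have := hcvx.secant_mono (a := 0) (x := a) (y := b) (mem_univ _) (mem_univ _)
      (mem_univ _) ha hb hab
    simp only [zero_mul, Real.exp_zero, sub_zero] at this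
    have h1 : (1 - Real.exp (a * t)) / a = -((Real.exp (a*t) - 1) / a) := by ring
    have h2 : (1 - Real.exp (b * t)) / b = -((Real.exp (b*t) - 1) / b) := by ring
    rw [h1, h2]; linarith
  have pos_le : ∀ b : ℝ, 0 < b → (1 - Real.exp (b * t)) / b ≤ -t := by
    intro b hb
    have h := Real.add_one_le_exp (b * t)
    rw [div_le_iff₀ hb]; nlinarith
  have neg_ge : ∀ a : ℝ, a < 0 → -t ≤ (1 - Real.exp (a * t)) / a := by
    intro a ha
    have h := Real.add_one_le_exp (a * t)
    rw [le_div_iff_of_neg ha]; nlinarith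
  intro a b hab
  rcases eq_or_lt_of_le hab with rfl | hab'
  · exact le_rfl
  show (if b = 0 then -t else (1 - Real.exp (b * t)) / b) ≤
    (if a = 0 then -t else (1 - Real.exp (a * t)) / a)
  by_cases ha : a = 0
  · subst ha
    have hb : b ≠ 0 := by positivity
    simp only [if_neg hb, if_pos rfl]
    exact pos_le b hab'
  by_cases hb : b = 0
  · subst hb
    simp only [if_neg ha, if_pos rfl]
    exact neg_ge a hab'
  simp only [if_neg ha, if_neg hb]
  exact key a b hab ha hb

lemma tgAux_zero_left (s : ℝ) : tgAux 0 s = 0 := by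
  unfold tgAux
  by_cases hs : s = 0
  · simp [hs]
  · simp [hs, Real.zero_rpow hs]

lemma tgAux_eq_of_pos {u : ℝ} (hu : 0 < u) (s : ℝ) :
    tgAux u s = u * (if s = 0 then -(Real.log u) else (1 - Real.exp (s * Real.log u)) / s) := by
  unfold tgAux
  by_cases hs : s = 0
  · simp only [if_pos hs]; ring
  · simp only [if_neg hs]
    rw [Real.rpow_def_of_pos hu, mul_comm (Real.log u) s]
    ring

lemma tgAux_anti {u : ℝ} (hu0 : 0 ≤ u) : Antitone (fun s => tgAux u s) := by
  rcases eq_or_lt_of_le hu0 with rfl | hu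
  · simp only [tgAux_zero_left]; exact antitone_const
  · intro a b hab
    simp only [tgAux_eq_of_pos hu]
    exact mul_le_mul_of_nonneg_left (hhAux_anti (Real.log u) hab) hu.le

lemma tgAux_nonneg {u : ℝ} (hu0 : 0 ≤ u) (hu1 : u ≤ 1) (s : ℝ) : 0 ≤ tgAux u s := by
  unfold tgAux
  rcases lt_trichotomy s 0 with hs | rfl | hs
  · rw [if_neg hs.ne]
    rcases eq_or_lt_of_le hu0 with rfl | hu
    · simp [Real.zero_rpow hs.ne]
    · have h1 : 1 ≤ u ^ s := Real.one_le_rpow_of_pos_of_le_one_of_nonpos hu hu1 hs.le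
      have : u * (1 - u ^ s) ≤ 0 := mul_nonpos_of_nonneg_of_nonpos hu0 (by linarith)
      have h2 : 1/s ≤ 0 := one_div_nonpos.mpr hs.le
      nlinarith
  · rw [if_pos rfl]
    have := Real.log_nonpos hu0 hu1
    nlinarith
  · rw [if_neg hs.ne']
    have h1 : u ^ s ≤ 1 := Real.rpow_le_one hu0 hu1 hs.le
    have h2 : 0 ≤ 1/s := one_div_nonneg.mpr hs.le
    exact mul_nonneg h2 (mul_nonneg hu0 (by linarith))

lemma tgAux_le_one_div {u : ℝ} (hu0 : 0 ≤ u) (hu1 : u ≤ 1) {s : ℝ} (hs : 0 < s) :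
    tgAux u s ≤ 1 / s := by
  unfold tgAux
  rw [if_neg hs.ne']
  have h0 : 0 ≤ u ^ s := Real.rpow_nonneg hu0 s
  have h2 : u * (1 - u ^ s) ≤ 1 := by nlinarith
  have h3 : 0 < 1 / s := by positivity
  calc 1/s * (u * (1 - u ^ s)) ≤ 1/s * 1 := by
        apply mul_le_mul_of_nonneg_left h2 h3.le
    _ = 1/s := mul_one _

lemma tgAux_tendsto_neg_one {u : ℝ} (hu : 0 < u) :
    Tendsto (fun s => tgAux u s) (nhdsWithin (-1 : ℝ) (Ioi (-1 : ℝ))) (nhds (1 - u)) := by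
  have hne : ∀ᶠ s in nhdsWithin (-1 : ℝ) (Ioi (-1 : ℝ)), s ≠ 0 ∧ s ∈ Iio (0:ℝ) := by
    have : Iio (0:ℝ) ∈ nhdsWithin (-1 : ℝ) (Ioi (-1 : ℝ)) :=
      nhdsWithin_le_nhds (Iio_mem_nhds (by norm_num))
    filter_upwards [this] with s hs using ⟨ne_of_lt hs, hs⟩
  have hcont : Tendsto (fun s : ℝ => u * ((1 - Real.exp (s * Real.log u)) / s))
      (nhds (-1 : ℝ)) (nhds (1 - u)) := by
    have hc : ContinuousAt (fun s : ℝ => u * ((1 - Real.exp (s * Real.log u)) / s)) (-1) := by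
      apply ContinuousAt.mul continuousAt_const
      apply ContinuousAt.div
      · exact (continuousAt_const.sub ((Real.continuous_exp.continuousAt).comp
          (continuousAt_id.mul continuousAt_const)))
      · exact continuousAt_id
      · norm_num
    have hval : u * ((1 - Real.exp ((-1) * Real.log u)) / (-1)) = 1 - u := by
      have hune : u ≠ 0 := hu.ne'
      rw [neg_one_mul, Real.exp_neg, Real.exp_log hu]
      rw [div_neg, div_one, mul_comm]
      rw [neg_sub, sub_mul, inv_mul_cancel₀ hune, one_mul]
    have := hc.tendsto
    rw [hval] at this
    exact this
  have h2 := hcont.mono_left (nhdsWithin_le_nhds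
    (s := Ioi (-1:ℝ)))
  apply h2.congr'
  filter_upwards [hne] with s hs
  rw [tgAux_eq_of_pos hu, if_neg hs.1]

lemma tgAux_le_limit {u : ℝ} (hu : 0 < u) {s : ℝ} (hs : -1 < s) :
    tgAux u s ≤ 1 - u := by
  refine ge_of_tendsto (tgAux_tendsto_neg_one hu) ?_
  have : Ioc (-1 : ℝ) s ∈ nhdsWithin (-1 : ℝ) (Ioi (-1 : ℝ)) :=
    Ioc_mem_nhdsGT_of_mem ⟨le_refl _, hs⟩
  filter_upwards [this] with s' hs'
  exact tgAux_anti hu.le hs'.2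

/-- For an integrable real random variable `X` with continuous cdf `F`,
the mapping `s ↦ Δ_s(X)` is nonincreasing on `(−1,∞)` (with values in `[0,∞]`),
`Δ_s(X) → 0` as `s → ∞`, and `Δ_s(X) → E[X] − ess inf X` as `s → −1⁺`,
the limit being `+∞` when `X` is not essentially bounded below. -/
theorem cumulative_tsallis_entropy_monotone_and_limits
    {Ω : Type*} [MeasureSpace Ω] [IsProbabilityMeasure (volume : Measure Ω)]
    (X : Ω → ℝ) (hXm : Measurable X) (hXint : Integrable X)
    (F : ℝ → ℝ) (hF : ∀ x, F x = ((volume : Measure Ω) {ω | X ω ≤ x}).toReal)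
    (hFcont : Continuous F)
    (D : ℝ → ℝ≥0∞)
    (hD0 : D 0 = ∫⁻ x : ℝ, ENNReal.ofReal (-(F x * Real.log (F x))))
    (hD : ∀ s : ℝ, s ≠ 0 → D s = ∫⁻ x : ℝ, ENNReal.ofReal ((1 / s) * (F x * (1 - F x ^ s)))) :
    AntitoneOn D (Ioi (-1 : ℝ))
    ∧ Tendsto D atTop (nhds 0)
    ∧ (∀ m : ℝ, IsGreatest {c : ℝ | ∀ᵐ ω ∂(volume : Measure Ω), c ≤ X ω} m →
        Tendsto D (nhdsWithin (-1 : ℝ) (Ioi (-1 : ℝ)))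
          (nhds (ENNReal.ofReal ((∫ ω, X ω ∂(volume : Measure Ω)) - m))))
    ∧ ((¬ ∃ c : ℝ, ∀ᵐ ω ∂(volume : Measure Ω), c ≤ X ω) →
        Tendsto D (nhdsWithin (-1 : ℝ) (Ioi (-1 : ℝ))) (nhds ⊤)) := by
  set μ : Measure Ω := volume with hμ
  -- basic facts about F
  have hμfin : ∀ x : ℝ, μ {ω | X ω ≤ x} ≠ ⊤ := fun x => measure_ne_top μ _
  have hFnonneg : ∀ x, 0 ≤ F x := fun x => (hF x) ▸ ENNReal.toReal_nonneg
  have hFle1 : ∀ x, F x ≤ 1 := by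
    intro x
    rw [hF x]
    exact ENNReal.toReal_le_of_le_ofReal zero_le_one (by simpa using prob_le_one)
  have hofF : ∀ x, ENNReal.ofReal (F x) = μ {ω | X ω ≤ x} := by
    intro x
    rw [hF x, ENNReal.ofReal_toReal (hμfin x)]
  have hFmono : Monotone F := by
    intro a b hab
    rw [hF a, hF b]
    exact ENNReal.toReal_mono (hμfin b) (measure_mono (fun ω h => le_trans h hab))
  have hmeasle : ∀ x : ℝ, MeasurableSet {ω | X ω ≤ x} := fun x => hXm measurableSet_Iic
  -- the integrand
  have hDg : ∀ s : ℝ, D s = ∫⁻ x : ℝ, ENNReal.ofReal (tgAux (F x) s) := by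
    intro s
    by_cases hs : s = 0
    · subst hs
      rw [hD0]
      apply lintegral_congr
      intro x
      simp [tgAux]
    · rw [hD s hs]
      apply lintegral_congr
      intro x
      simp [tgAux, hs]
  have hmeas : ∀ s : ℝ, Measurable fun x : ℝ => ENNReal.ofReal (tgAux (F x) s) := by
    intro s
    apply ENNReal.measurable_ofReal.comp
    by_cases hs : s = 0
    · subst hs
      simp only [tgAux, if_pos rfl]
      exact (hFcont.measurable.mul (Real.measurable_log.comp hFcont.measurable)).neg
    · simp only [tgAux, if_neg hs]
      exact measurable_const.mul (hFcont.measurable.mul (measurable_const.sub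
        (hFcont.measurable.pow measurable_const)))
  -- antitonicity
  have hAnti : Antitone D := by
    intro a b hab
    rw [hDg a, hDg b]
    exact lintegral_mono fun x => ENNReal.ofReal_le_ofReal (tgAux_anti (hFnonneg x) hab)
  have hAntiOn : AntitoneOn D (Ioi (-1 : ℝ)) := hAnti.antitoneOn _
  -- no atoms
  have hatom : ∀ c : ℝ, μ {ω | X ω = c} = 0 := by
    intro c
    have key : ∀ n : ℕ, (μ {ω | X ω = c}).toReal ≤ F c - F (c - 1/(n+1)) := by
      intro n
      have hlt : c - 1/(n+1) < c := by
        have : (0:ℝ) < 1/(n+1) := by positivity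
        linarith
      have hsub : {ω | X ω = c} ⊆ {ω | X ω ≤ c} \ {ω | X ω ≤ c - 1/(n+1)} := by
        intro ω hω
        simp only [mem_setOf_eq, mem_diff] at hω ⊢
        constructor
        · exact le_of_eq hω
        · rw [hω]; exact not_le.mpr hlt
      have hdiff : μ ({ω | X ω ≤ c} \ {ω | X ω ≤ c - 1/(n+1)})
          = μ {ω | X ω ≤ c} - μ {ω | X ω ≤ c - 1/(n+1)} := by
        apply measure_diff _ (hmeasle _).nullMeasurableSet (hμfin _)
        intro ω hω
        simp only [mem_setOf_eq] at hω ⊢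
        linarith
      have hmono2 : {ω | X ω ≤ c - 1/(n+1)} ⊆ {ω | X ω ≤ c} := by
        intro ω hω
        simp only [mem_setOf_eq] at hω ⊢
        linarith
      calc (μ {ω | X ω = c}).toReal
          ≤ (μ ({ω | X ω ≤ c} \ {ω | X ω ≤ c - 1/(n+1)})).toReal :=
            ENNReal.toReal_mono (measure_ne_top μ _) (measure_mono hsub)
        _ = F c - F (c - 1/(n+1)) := by
            rw [hdiff, ENNReal.toReal_sub_of_le (measure_mono hmono2) (hμfin _), hF, hF]
    have htend : Tendsto (fun n : ℕ => F c - F (c - 1/(n+1))) atTop (nhds 0) := by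
      have h1 : Tendsto (fun n : ℕ => c - 1/(n+1)) atTop (nhds c) := by
        have := tendsto_one_div_add_atTop_nhds_zero_nat (𝕜 := ℝ)
        have h2 := tendsto_const_nhds (x := c) (f := atTop (α := ℕ)) |>.sub this
        simpa using h2
      have h3 := (hFcont.continuousAt (x := c)).tendsto.comp h1
      have h4 := tendsto_const_nhds (x := F c) (f := atTop (α := ℕ)) |>.sub h3
      simpa using h4
    have hle : (μ {ω | X ω = c}).toReal ≤ 0 := ge_of_tendsto' htend key
    have h0 : (μ {ω | X ω = c}).toReal = 0 := le_antisymm hle ENNReal.toReal_nonneg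
    exact (ENNReal.toReal_eq_zero_iff _).mp h0 |>.resolve_right (measure_ne_top μ _)
  have hcompl : ∀ x : ℝ, ENNReal.ofReal (1 - F x) = μ {ω | x < X ω} := by
    intro x
    have hc : {ω | X ω ≤ x}ᶜ = {ω | x < X ω} := by
      ext ω; simp [not_le]
    rw [← hc, measure_compl (hmeasle x) (hμfin x), measure_univ,
      ENNReal.ofReal_sub _ (hFnonneg x), ENNReal.ofReal_one, hofF]
  -- finiteness of the positive tail
  have htailpos : ∫⁻ x in Ioi (0:ℝ), μ {ω | x < X ω} ≠ ⊤ := by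
    have hmaxint : ∫⁻ ω, ENNReal.ofReal (max (X ω) 0) ∂μ ≠ ⊤ := by
      have hb := hXint.hasFiniteIntegral
      rw [hasFiniteIntegral_iff_norm] at hb
      refine ne_of_lt (lt_of_le_of_lt (lintegral_mono fun ω => ?_) hb)
      exact ENNReal.ofReal_le_ofReal (by simp [Real.norm_eq_abs, le_abs_self, abs_nonneg,
        max_le_iff, le_abs_self, abs_nonneg])
    have hlc := lintegral_eq_lintegral_meas_lt μ
      (f := fun ω => max (X ω) 0) (ae_of_all _ fun ω => le_max_right _ _)
      (hXm.max measurable_const).aemeasurable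
    have heq : ∫⁻ x in Ioi (0:ℝ), μ {a | x < max (X a) 0}
        = ∫⁻ x in Ioi (0:ℝ), μ {ω | x < X ω} := by
      apply setLIntegral_congr_fun_ae measurableSet_Ioi
      apply ae_of_all
      intro x hx
      congr 1
      ext a
      simp only [mem_setOf_eq, lt_max_iff]
      constructor
      · rintro (h | h)
        · exact h
        · exact absurd h (not_lt.mpr (le_of_lt hx)).elim
      · exact Or.inl
    rw [hlc, heq] at hmaxint
    exact hmaxint
  -- finiteness of the negative tail
  have htailneg : ∫⁻ x in Iic (0:ℝ), μ {ω | X ω ≤ x} ≠ ⊤ := by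
    have hmaxint : ∫⁻ ω, ENNReal.ofReal (max (-X ω) 0) ∂μ ≠ ⊤ := by
      have hb := hXint.hasFiniteIntegral
      rw [hasFiniteIntegral_iff_norm] at hb
      refine ne_of_lt (lt_of_le_of_lt (lintegral_mono fun ω => ?_) hb)
      refine ENNReal.ofReal_le_ofReal ?_
      rw [Real.norm_eq_abs]
      exact max_le (neg_le_abs _) (abs_nonneg _)
    have hlc := lintegral_eq_lintegral_meas_lt μ
      (f := fun ω => max (-X ω) 0) (ae_of_all _ fun ω => le_max_right _ _)
      (hXm.neg.max measurable_const).aemeasurable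
    have heq : ∫⁻ t in Ioi (0:ℝ), μ {a | t < max (-X a) 0}
        = ∫⁻ t in Ioi (0:ℝ), μ {ω | X ω ≤ -t} := by
      apply setLIntegral_congr_fun_ae measurableSet_Ioi
      apply ae_of_all
      intro t ht
      have h1 : {a | t < max (-X a) 0} = {a | X a < -t} := by
        ext a
        simp only [mem_setOf_eq, lt_max_iff]
        constructor
        · rintro (h | h)
          · linarith
          · exact absurd h (not_lt.mpr (le_of_lt ht)).elim
        · intro h; exact Or.inl (by linarith)
      rw [h1]
      -- μ {X < -t} = μ {X ≤ -t} using no atoms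
      have h2 : {ω | X ω ≤ -t} = {ω | X ω < -t} ∪ {ω | X ω = -t} := by
        ext ω; simp only [mem_setOf_eq, mem_union, le_iff_lt_or_eq]
      refine le_antisymm (measure_mono fun ω h => le_of_lt (show X ω < -t from h)) ?_
      rw [h2]
      refine le_trans (measure_union_le _ _) ?_
      rw [hatom, add_zero]
    rw [hlc, heq] at hmaxint
    -- change of variables x = -t
    have hcv : ∫⁻ t in Ioi (0:ℝ), μ {ω | X ω ≤ -t}
        = ∫⁻ x in Iio (0:ℝ), μ {ω | X ω ≤ x} := by
      have hmp := Measure.measurePreserving_neg (volume : Measure ℝ)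
      have hemb : MeasurableEmbedding (fun t : ℝ => -t) :=
        (Homeomorph.neg ℝ).measurableEmbedding
      have := hmp.setLIntegral_comp_emb hemb (fun x => μ {ω | X ω ≤ x}) (Ioi 0)
      rw [this]
      have himg : (fun t : ℝ => -t) '' Ioi 0 = Iio 0 := by
        ext x
        constructor
        · rintro ⟨t, ht, rfl⟩
          simpa using ht
        · intro hx
          exact ⟨-x, by simpa using hx, by ring⟩
      rw [himg]
    rw [hcv] at hmaxint
    have : ∫⁻ x in Iic (0:ℝ), μ {ω | X ω ≤ x} = ∫⁻ x in Iio (0:ℝ), μ {ω | X ω ≤ x} :=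
      (setLIntegral_congr (Iio_ae_eq_Iic (a := (0:ℝ)))).symm
    rw [this]
    exact hmaxint
  -- D 1 is finite
  have hD1fin : D 1 ≠ ⊤ := by
    rw [hDg 1]
    have hsplit : ∫⁻ x : ℝ, ENNReal.ofReal (tgAux (F x) 1)
        = (∫⁻ x in Iic (0:ℝ), ENNReal.ofReal (tgAux (F x) 1))
          + ∫⁻ x in Ioi (0:ℝ), ENNReal.ofReal (tgAux (F x) 1) := by
      rw [← lintegral_add_compl (μ := volume) _ (measurableSet_Iic (a := (0:ℝ))), compl_Iic]
    have htg1 : ∀ x, tgAux (F x) 1 = F x * (1 - F x) := by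
      intro x
      simp [tgAux, Real.rpow_one]
    rw [hsplit]
    apply ENNReal.add_ne_top.mpr
    have hmeasmu1 : Measurable fun x : ℝ => μ {ω | X ω ≤ x} := by
      have : (fun x : ℝ => μ {ω | X ω ≤ x}) = fun x => ENNReal.ofReal (F x) := by
        funext x; rw [hofF]
      rw [this]
      exact ENNReal.measurable_ofReal.comp hFcont.measurable
    have hmeasmu2 : Measurable fun x : ℝ => μ {ω | x < X ω} := by
      have : (fun x : ℝ => μ {ω | x < X ω}) = fun x => ENNReal.ofReal (1 - F x) := by
        funext x; rw [hcompl]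
      rw [this]
      exact ENNReal.measurable_ofReal.comp (continuous_const.sub hFcont).measurable
    constructor
    · refine ne_of_lt (lt_of_le_of_lt (setLIntegral_mono hmeasmu1 ?_)
        (lt_top_iff_ne_top.mpr htailneg))
      intro x _
      rw [htg1, ← hofF x]
      apply ENNReal.ofReal_le_ofReal
      nlinarith [hFnonneg x, hFle1 x]
    · refine ne_of_lt (lt_of_le_of_lt (setLIntegral_mono hmeasmu2 ?_)
        (lt_top_iff_ne_top.mpr htailpos))
      intro x _
      rw [htg1, ← hcompl x]
      apply ENNReal.ofReal_le_ofReal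
      nlinarith [hFnonneg x, hFle1 x]
  -- shared machinery for the limit at -1⁺
  set L : ℝ → ℝ := fun x => if F x = 0 then 0 else 1 - F x with hLdef
  set T : ℝ≥0∞ := ∫⁻ x : ℝ, ENNReal.ofReal (L x) with hTdef
  set sseq : ℕ → ℝ := fun n => -1 + 1/(n+1) with hsseqdef
  have hsseq_mem : ∀ n, sseq n ∈ Ioi (-1:ℝ) := by
    intro n
    have : (0:ℝ) < 1/(n+1) := by positivity
    simp only [hsseqdef, mem_Ioi]
    linarith
  have hsseq_anti : Antitone sseq := by
    intro n k hnk
    simp only [hsseqdef]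
    have h1 : (0:ℝ) < n + 1 := by positivity
    have h2 : (n:ℝ) + 1 ≤ (k:ℝ) + 1 := by
      have : (n:ℝ) ≤ k := Nat.cast_le.mpr hnk
      linarith
    have := one_div_le_one_div_of_le h1 h2
    linarith
  have hsseq_tend : Tendsto sseq atTop (nhdsWithin (-1:ℝ) (Ioi (-1:ℝ))) := by
    apply tendsto_nhdsWithin_of_tendsto_nhds_of_eventually_within
    · have h1 := tendsto_one_div_add_atTop_nhds_zero_nat (𝕜 := ℝ)
      have h2 := (tendsto_const_nhds (x := (-1:ℝ)) (f := atTop (α := ℕ))).add h1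
      simpa [hsseqdef] using h2
    · exact Eventually.of_forall hsseq_mem
  have hmonoseq : ∀ x : ℝ, Monotone fun n => ENNReal.ofReal (tgAux (F x) (sseq n)) := by
    intro x n k hnk
    exact ENNReal.ofReal_le_ofReal (tgAux_anti (hFnonneg x) (hsseq_anti hnk))
  have hsup : ∀ x : ℝ, (⨆ n, ENNReal.ofReal (tgAux (F x) (sseq n))) = ENNReal.ofReal (L x) := by
    intro x
    by_cases hFx : F x = 0
    · simp only [hLdef, hFx, if_pos, tgAux_zero_left]
      simp
    · have hpos : 0 < F x := lt_of_le_of_ne (hFnonneg x) (Ne.symm hFx)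
      have htt : Tendsto (fun n => ENNReal.ofReal (tgAux (F x) (sseq n))) atTop
          (nhds (ENNReal.ofReal (1 - F x))) :=
        (ENNReal.continuous_ofReal.tendsto _).comp
          ((tgAux_tendsto_neg_one hpos).comp hsseq_tend)
      have := tendsto_nhds_unique (tendsto_atTop_iSup (hmonoseq x)) htt
      rw [this]
      simp only [hLdef, if_neg hFx]
  have hDsup : (⨆ n, D (sseq n)) = T := by
    have h1 : ∀ n, D (sseq n) = ∫⁻ x : ℝ, ENNReal.ofReal (tgAux (F x) (sseq n)) :=
      fun n => hDg (sseq n)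
    calc (⨆ n, D (sseq n))
        = ⨆ n, ∫⁻ x : ℝ, ENNReal.ofReal (tgAux (F x) (sseq n)) := by
          exact iSup_congr h1
      _ = ∫⁻ x : ℝ, ⨆ n, ENNReal.ofReal (tgAux (F x) (sseq n)) := by
          rw [lintegral_iSup (fun n => hmeas (sseq n))]
          intro n k hnk
          intro x
          exact hmonoseq x hnk
      _ = T := by
          rw [hTdef]
          exact lintegral_congr hsup
  have hDleT : ∀ s ∈ Ioi (-1:ℝ), D s ≤ T := by
    intro s hs
    rw [hDg s, hTdef]
    apply lintegral_mono
    intro x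
    apply ENNReal.ofReal_le_ofReal
    by_cases hFx : F x = 0
    · simp only [hLdef, if_pos hFx]
      rw [hFx, tgAux_zero_left]
    · have hpos : 0 < F x := lt_of_le_of_ne (hFnonneg x) (Ne.symm hFx)
      simp only [hLdef, if_neg hFx]
      exact tgAux_le_limit hpos hs
  have htendT : Tendsto D (nhdsWithin (-1:ℝ) (Ioi (-1:ℝ))) (nhds T) := by
    refine tendsto_order.2 ⟨?_, ?_⟩
    · intro b hb
      rw [← hDsup] at hb
      obtain ⟨n, hn⟩ := lt_iSup_iff.mp hb
      filter_upwards [Ioc_mem_nhdsGT (hsseq_mem n)] with s hs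
      exact lt_of_lt_of_le hn (hAnti hs.2)
    · intro b hb
      filter_upwards [self_mem_nhdsWithin] with s hs
      exact lt_of_le_of_lt (hDleT s hs) hb
  refine ⟨hAntiOn, ?_, ?_, ?_⟩
  · -- tendsto at top
    have hlim := tendsto_lintegral_filter_of_dominated_convergence
      (μ := (volume : Measure ℝ)) (l := (atTop : Filter ℝ))
      (F := fun s x => ENNReal.ofReal (tgAux (F x) s))
      (f := fun _ => 0)
      (fun x => ENNReal.ofReal (tgAux (F x) 1))
      (Eventually.of_forall fun s => hmeas s)
      ?_ (by rw [← hDg 1]; exact hD1fin) ?_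
    · have : ∫⁻ (_ : ℝ), (0:ℝ≥0∞) = 0 := lintegral_zero
      rw [this] at hlim
      exact Tendsto.congr (fun s => (hDg s).symm) hlim
    · filter_upwards [eventually_ge_atTop (1:ℝ)] with s hs
      apply ae_of_all
      intro x
      exact ENNReal.ofReal_le_ofReal (tgAux_anti (hFnonneg x) hs)
    · apply ae_of_all
      intro x
      have hub : Tendsto (fun s : ℝ => ENNReal.ofReal (1/s)) atTop (nhds 0) := by
        have h1 : Tendsto (fun s : ℝ => 1/s) atTop (nhds 0) := by
          simpa using tendsto_inv_atTop_zero
        have := (ENNReal.continuous_ofReal.tendsto 0).comp h1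
        simpa [Function.comp_def] using this
      apply tendsto_of_tendsto_of_tendsto_of_le_of_le' tendsto_const_nhds hub
      · exact Eventually.of_forall fun s => zero_le
      · filter_upwards [eventually_gt_atTop (0:ℝ)] with s hs
        exact ENNReal.ofReal_le_ofReal (tgAux_le_one_div (hFnonneg x) (hFle1 x) hs)
  · -- limit at -1⁺, essential infimum exists
    intro m hm
    have hFzero : ∀ x : ℝ, F x = 0 ↔ x ≤ m := by
      have hmlow := hm.1
      have hFm : ∀ x < m, F x = 0 := by
        intro x hx
        rw [hF x]
        have : μ {ω | X ω ≤ x} = 0 := by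
          apply measure_mono_null _ (ae_iff.mp hmlow)
          intro ω hω
          simp only [mem_setOf_eq] at hω ⊢
          push_neg
          linarith
        rw [this]; simp
      have hFm0 : F m = 0 := by
        have h1 : Tendsto (fun n : ℕ => m - 1/(n+1)) atTop (nhds m) := by
          have := tendsto_one_div_add_atTop_nhds_zero_nat (𝕜 := ℝ)
          have h2 := (tendsto_const_nhds (x := m) (f := atTop (α := ℕ))).sub this
          simpa using h2
        have h3 := (hFcont.continuousAt (x := m)).tendsto.comp h1
        have h4 : Tendsto (fun n : ℕ => F (m - 1/(n+1))) atTop (nhds 0) := by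
          apply Tendsto.congr' _ tendsto_const_nhds
          apply Eventually.of_forall
          intro n
          refine (hFm _ ?_).symm
          have : (0:ℝ) < 1/(n+1) := by positivity
          linarith
        exact (tendsto_nhds_unique h3 h4)
      intro x
      constructor
      · intro hx0
        have hxS : x ∈ {c : ℝ | ∀ᵐ ω ∂μ, c ≤ X ω} := by
          have hx1 : μ {ω | X ω ≤ x} = 0 := by
            rw [← hofF x, hx0]; simp
          rw [mem_setOf_eq, ae_iff]
          apply measure_mono_null _ hx1
          intro ω hω
          simp only [mem_setOf_eq] at hω ⊢
          push_neg at hω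
          linarith
        exact hm.2 hxS
      · intro hx
        refine le_antisymm ?_ (hFnonneg x)
        rw [← hFm0]
        exact hFmono hx
    have hTval : T = ENNReal.ofReal ((∫ ω, X ω ∂μ) - m) := by
      have hLind : ∀ x : ℝ, ENNReal.ofReal (L x)
          = (Ioi m).indicator (fun x => ENNReal.ofReal (1 - F x)) x := by
        intro x
        by_cases hx : x ∈ Ioi m
        · rw [indicator_of_mem hx]
          have : ¬ F x = 0 := by
            rw [hFzero]; exact not_le.mpr hx
          simp only [hLdef, if_neg this]
        · rw [indicator_of_notMem hx]
          have : F x = 0 := (hFzero x).mpr (not_lt.mp hx)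
          simp only [hLdef, if_pos this]
          simp
      have h1 : T = ∫⁻ x in Ioi m, ENNReal.ofReal (1 - F x) := by
        rw [hTdef, lintegral_congr hLind, lintegral_indicator measurableSet_Ioi _]
      have h2 : ∫⁻ x in Ioi m, ENNReal.ofReal (1 - F x)
          = ∫⁻ x in Ioi m, μ {ω | x < X ω} := lintegral_congr fun x => hcompl x
      have hcv : ∫⁻ t in Ioi (0:ℝ), μ {ω | m + t < X ω}
          = ∫⁻ x in Ioi m, μ {ω | x < X ω} := by
        have hmp := measurePreserving_add_left (volume : Measure ℝ) m
        have hemb : MeasurableEmbedding (fun t : ℝ => m + t) :=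
          (Homeomorph.addLeft m).measurableEmbedding
        have h3 := hmp.setLIntegral_comp_emb hemb (fun x => μ {ω | x < X ω}) (Ioi 0)
        rw [h3]
        have himg : (fun x : ℝ => m + x) '' Ioi 0 = Ioi m := by
          ext x
          constructor
          · rintro ⟨t, ht, rfl⟩
            simpa using ht
          · intro hx
            exact ⟨x - m, by simp only [mem_Ioi] at hx ⊢; linarith, by ring⟩
        rw [himg]
      have hnn : 0 ≤ᵐ[μ] fun ω => X ω - m := by
        filter_upwards [hm.1] with ω hω
        simp only [Pi.zero_apply]
        linarith
      have hlc := lintegral_eq_lintegral_meas_lt μ (f := fun ω => X ω - m) hnn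
        ((hXm.sub measurable_const).aemeasurable)
      have h4 : ∫⁻ t in Ioi (0:ℝ), μ {a | t < X a - m}
          = ∫⁻ t in Ioi (0:ℝ), μ {ω | m + t < X ω} := by
        apply lintegral_congr
        intro t
        congr 1
        ext a
        simp only [mem_setOf_eq]
        constructor <;> intro h <;> linarith
      have h5 : ENNReal.ofReal ((∫ ω, X ω ∂μ) - m) = ∫⁻ ω, ENNReal.ofReal (X ω - m) ∂μ := by
        have hint : Integrable (fun ω => X ω - m) μ := hXint.sub (integrable_const m)
        have h6 := ofReal_integral_eq_lintegral_ofReal hint hnn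
        rw [← h6]
        congr 1
        rw [integral_sub hXint (integrable_const m), integral_const]
        simp
      rw [h1, h2, ← hcv, ← h4, ← hlc, ← h5]
    rw [← hTval]
    exact htendT
  · -- limit at -1⁺, no essential lower bound
    intro hnot
    have hFpos : ∀ x : ℝ, F x ≠ 0 := by
      intro x hx0
      apply hnot
      refine ⟨x, ?_⟩
      have hx1 : μ {ω | X ω ≤ x} = 0 := by
        rw [← hofF x, hx0]; simp
      rw [ae_iff]
      apply measure_mono_null _ hx1
      intro ω hω
      simp only [mem_setOf_eq] at hω ⊢
      push_neg at hω
      linarith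
    have hTtop : T = ⊤ := by
      -- find a point where F < 1/2
      have hiInter : ⋂ n : ℕ, {ω | X ω ≤ -(n:ℝ)} = ∅ := by
        ext ω
        simp only [mem_iInter, mem_setOf_eq, mem_empty_iff_false, iff_false, not_forall]
        obtain ⟨n, hn⟩ := exists_nat_gt (-X ω)
        exact ⟨n, by push_neg; linarith⟩
      have htm := tendsto_measure_iInter_atTop (μ := μ)
        (s := fun n : ℕ => {ω | X ω ≤ -(n:ℝ)})
        (fun n => (hmeasle _).nullMeasurableSet)
        (fun n k hnk ω hω => by
          simp only [mem_setOf_eq] at hω ⊢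
          have : (n:ℝ) ≤ k := Nat.cast_le.mpr hnk
          linarith)
        ⟨0, measure_ne_top μ _⟩
      rw [hiInter] at htm
      simp only [measure_empty] at htm
      have hev : ∀ᶠ n : ℕ in atTop, μ {ω | X ω ≤ -(n:ℝ)} < ENNReal.ofReal (1/2) := by
        apply htm.eventually_lt_const
        simp [ENNReal.ofReal_pos]
      obtain ⟨n, hn⟩ := hev.exists
      have hFn : F (-(n:ℝ)) < 1/2 := by
        rw [hF]
        have := ENNReal.toReal_lt_toReal (measure_ne_top μ _) (ENNReal.ofReal_ne_top) |>.mpr hn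
        rwa [ENNReal.toReal_ofReal (by norm_num)] at this
      have hLhalf : ∀ x ≤ -(n:ℝ), ENNReal.ofReal (1/2) ≤ ENNReal.ofReal (L x) := by
        intro x hx
        apply ENNReal.ofReal_le_ofReal
        have hFx : F x < 1/2 := lt_of_le_of_lt (hFmono hx) hFn
        simp only [hLdef, if_neg (hFpos x)]
        linarith
      have hmeasL : Measurable fun x : ℝ => ENNReal.ofReal (L x) := by
        have : (fun x : ℝ => ENNReal.ofReal (L x)) = fun x => ENNReal.ofReal (1 - F x) := by
          funext x
          simp only [hLdef, if_neg (hFpos x)]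
        rw [this]
        exact ENNReal.measurable_ofReal.comp (continuous_const.sub hFcont).measurable
      have hbig : (⊤:ℝ≥0∞) ≤ T := by
        calc (⊤:ℝ≥0∞) = ENNReal.ofReal (1/2) * volume (Iic (-(n:ℝ))) := by
              rw [Real.volume_Iic, ENNReal.mul_top]
              simp [ENNReal.ofReal_eq_zero]
          _ = ∫⁻ _ in Iic (-(n:ℝ)), ENNReal.ofReal (1/2) := by
              rw [setLIntegral_const]
          _ ≤ ∫⁻ x in Iic (-(n:ℝ)), ENNReal.ofReal (L x) := by
              apply setLIntegral_mono hmeasL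
              intro x hx
              exact hLhalf x hx
          _ ≤ T := by
              rw [hTdef]
              exact setLIntegral_le_lintegral _ _
      exact top_le_iff.mp hbig
    rw [← hTtop]
    exact htendT
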